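/- Define, for T, x₁, x₂ > 0, h_T(x₁,x₂) = 2 arccosh(cosh(x₁/2)cosh(x₂/2) + cosh(T) sinh(x₁/2)sinh(x₂/2)), and let 𝔇 = {(T,x₁,x₂) ∈ (0,∞)³ : cosh(T) sinh(x₁/2)sinh(x₂/2) − cosh(x₁/2)cosh(x₂/2) > 1}. Then for every measurable function F : ℝ → [0,∞], one has the change-of-variables identity ∫_{(0,∞)³} F(𝔏₈(x₁,x₂,x₃)) sinh(x₁/2)sinh(x₂/2)sinh(x₃/2) dx₁ dx₂ dx₃ = 2 ∫_𝔇 F(h_T(x₁,x₂)) sinh²(x₁/2) sinh²(x₂/2) sinh(T) dT dx₁ dx₂. -/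

import Mathlib

open MeasureTheory Real Set
open scoped ENNReal

noncomputable section

/-- Inverse hyperbolic cosine: `arcosh y = log (y + √(y² − 1))`. -/
def arcosh (y : ℝ) : ℝ := Real.log (y + Real.sqrt (y ^ 2 - 1))

/-- The figure-eight length function
`𝔏₈(x₁,x₂,x₃) = 2 arcosh(2 cosh(x₁/2)cosh(x₂/2) + cosh(x₃/2))`. -/
def L8 (x₁ x₂ x₃ : ℝ) : ℝ :=
  2 * _root_.arcosh (2 * Real.cosh (x₁ / 2) * Real.cosh (x₂ / 2) + Real.cosh (x₃ / 2))

/-- `h_T(x₁,x₂) = 2 arcosh(cosh(x₁/2)cosh(x₂/2) + cosh(T) sinh(x₁/2)sinh(x₂/2))`. -/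
def hT (T x₁ x₂ : ℝ) : ℝ :=
  2 * _root_.arcosh (Real.cosh (x₁ / 2) * Real.cosh (x₂ / 2)
    + Real.cosh T * Real.sinh (x₁ / 2) * Real.sinh (x₂ / 2))

/-- The domain `𝔇` of the coordinates `(T, x₁, x₂)`. -/
def frakD : Set (ℝ × ℝ × ℝ) :=
  {p : ℝ × ℝ × ℝ | 0 < p.1 ∧ 0 < p.2.1 ∧ 0 < p.2.2 ∧
    1 < Real.cosh p.1 * Real.sinh (p.2.1 / 2) * Real.sinh (p.2.2 / 2)
      - Real.cosh (p.2.1 / 2) * Real.cosh (p.2.2 / 2)}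

lemma measurable_arcosh : Measurable _root_.arcosh := by
  unfold _root_.arcosh
  exact Real.measurable_log.comp (by fun_prop)

lemma cosh_arcosh {y : ℝ} (hy : 1 ≤ y) : Real.cosh (_root_.arcosh y) = y := by
  have h1 : 0 ≤ y ^ 2 - 1 := by nlinarith
  have hs : Real.sqrt (y ^ 2 - 1) ^ 2 = y ^ 2 - 1 := Real.sq_sqrt h1
  set s := Real.sqrt (y ^ 2 - 1) with hsdef
  have hs0 : 0 ≤ s := Real.sqrt_nonneg _
  have ht0 : 0 < y + s := by linarith
  have hmul : (y + s) * (y - s) = 1 := by nlinarith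
  have hinv : (y + s)⁻¹ = y - s := inv_eq_of_mul_eq_one_right hmul
  rw [_root_.arcosh, Real.cosh_eq, Real.exp_log ht0, ← Real.log_inv, Real.exp_log (by positivity), hinv]
  ring

lemma arcosh_nonneg {y : ℝ} (hy : 1 ≤ y) : 0 ≤ _root_.arcosh y :=
  Real.log_nonneg (by have := Real.sqrt_nonneg (y ^ 2 - 1); linarith)

lemma arcosh_pos {y : ℝ} (hy : 1 < y) : 0 < _root_.arcosh y :=
  Real.log_pos (by have := Real.sqrt_nonneg (y ^ 2 - 1); linarith)

lemma my_lintegral_image {s : Set ℝ} {f f' : ℝ → ℝ} (hs : MeasurableSet s)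
    (hf' : ∀ x ∈ s, HasDerivWithinAt f (f' x) s x) (hf : InjOn f s) (g : ℝ → ℝ≥0∞) :
    ∫⁻ x in f '' s, g x = ∫⁻ x in s, ENNReal.ofReal |f' x| * g (f x) := by
  simpa only [ContinuousLinearMap.det_toSpanSingleton] using
    lintegral_image_eq_lintegral_abs_det_fderiv_mul volume hs
      (fun x hx => (hf' x hx).hasFDerivWithinAt) hf g

lemma image_cosh_half : (fun x : ℝ => Real.cosh (x / 2)) '' Ioi 0 = Ioi 1 := by
  ext u
  constructor
  · rintro ⟨x, hx, rfl⟩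
    exact mem_Ioi.mpr (Real.one_lt_cosh.mpr (by simp at hx ⊢; linarith))
  · intro hu
    refine ⟨2 * _root_.arcosh u, ?_, ?_⟩
    · exact mem_Ioi.mpr (by have := _root_.arcosh_pos (mem_Ioi.mp hu); linarith)
    · show Real.cosh (2 * _root_.arcosh u / 2) = u
      rw [show (2:ℝ) * _root_.arcosh u / 2 = _root_.arcosh u by ring]
      exact _root_.cosh_arcosh (le_of_lt (mem_Ioi.mp hu))

lemma injOn_cosh_half : InjOn (fun x : ℝ => Real.cosh (x / 2)) (Ioi 0) := by
  intro a ha b hb h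
  have := Real.cosh_strictMonoOn.injOn (by simp at ha ⊢; linarith : a / 2 ∈ Ici (0:ℝ))
    (by simp at hb ⊢; linarith : b / 2 ∈ Ici (0:ℝ)) h
  linarith

lemma key_left (g : ℝ → ℝ≥0∞) :
    ∫⁻ x in Ioi (0:ℝ), g (Real.cosh (x / 2)) * ENNReal.ofReal (Real.sinh (x / 2))
      = 2 * ∫⁻ u in Ioi (1:ℝ), g u := by
  have hderiv : ∀ x ∈ Ioi (0:ℝ), HasDerivWithinAt (fun x : ℝ => Real.cosh (x / 2))
      (Real.sinh (x / 2) * (1 / 2)) (Ioi 0) x := fun x _ =>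
    by have := ((Real.hasDerivAt_cosh (x / 2)).comp x
      ((hasDerivAt_id' x).div_const 2)).hasDerivWithinAt (s := Ioi 0); exact this
  rw [← image_cosh_half, my_lintegral_image measurableSet_Ioi hderiv injOn_cosh_half g,
    ← lintegral_const_mul' 2 _ (by norm_num : (2:ℝ≥0∞) ≠ ⊤)]
  refine setLIntegral_congr_fun measurableSet_Ioi (fun x hx => ?_)
  have h1 : 0 < Real.sinh (x / 2) := Real.sinh_pos_iff.mpr (by simp at hx; linarith)
  have h2 : (2:ℝ≥0∞) * ENNReal.ofReal (1 / 2) = 1 := by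
    rw [show (2:ℝ≥0∞) = ENNReal.ofReal 2 by simp, ← ENNReal.ofReal_mul (by norm_num)]
    norm_num
  rw [abs_of_nonneg (by positivity), ENNReal.ofReal_mul h1.le]
  calc g (Real.cosh (x / 2)) * ENNReal.ofReal (Real.sinh (x / 2))
      = (2 * ENNReal.ofReal (1 / 2)) * (ENNReal.ofReal (Real.sinh (x / 2)) * g (Real.cosh (x / 2))) := by
        rw [h2]; ring
    _ = 2 * (ENNReal.ofReal (Real.sinh (x / 2)) * ENNReal.ofReal (1 / 2) * g (Real.cosh (x / 2))) := by
        ring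

lemma key_right (g : ℝ → ℝ≥0∞) {S C : ℝ} (hS : 0 < S) (hSC : S ≤ C) :
    ∫⁻ T in {T : ℝ | 0 < T ∧ 1 < Real.cosh T * S - C},
        g (Real.cosh T * S - C) * ENNReal.ofReal (Real.sinh T * S)
      = ∫⁻ u in Ioi (1:ℝ), g u := by
  set s : Set ℝ := {T : ℝ | 0 < T ∧ 1 < Real.cosh T * S - C} with hs_def
  have hmeas : MeasurableSet s := by
    have : s = Ioi 0 ∩ (fun T : ℝ => Real.cosh T * S - C) ⁻¹' Ioi 1 := by
      ext T; simp [hs_def, and_comm]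
    rw [this]
    exact measurableSet_Ioi.inter (((Real.continuous_cosh.mul continuous_const).sub
      continuous_const).measurable measurableSet_Ioi)
  have himage : (fun T : ℝ => Real.cosh T * S - C) '' s = Ioi 1 := by
    ext u
    constructor
    · rintro ⟨T, hT, rfl⟩; exact mem_Ioi.mpr hT.2
    · intro hu
      have hu1 : 1 < u := mem_Ioi.mp hu
      have hy : 1 < (u + C) / S := (one_lt_div hS).mpr (by linarith)
      refine ⟨_root_.arcosh ((u + C) / S), ⟨_root_.arcosh_pos hy, ?_⟩, ?_⟩
      · show 1 < Real.cosh (_root_.arcosh ((u + C) / S)) * S - C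
        rw [_root_.cosh_arcosh hy.le, div_mul_cancel₀ _ hS.ne']; linarith
      · show Real.cosh (_root_.arcosh ((u + C) / S)) * S - C = u
        rw [_root_.cosh_arcosh hy.le, div_mul_cancel₀ _ hS.ne']; ring
  have hinj : InjOn (fun T : ℝ => Real.cosh T * S - C) s := by
    intro a ha b hb h
    simp only at h
    have : Real.cosh a = Real.cosh b := by
      exact mul_right_cancel₀ hS.ne' (by linarith)
    exact Real.cosh_strictMonoOn.injOn (le_of_lt ha.1) (le_of_lt hb.1) this
  have hderiv : ∀ T ∈ s, HasDerivWithinAt (fun T : ℝ => Real.cosh T * S - C)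
      (Real.sinh T * S) s T := fun T _ =>
    (((Real.hasDerivAt_cosh T).mul_const S).sub_const C).hasDerivWithinAt
  rw [← himage, my_lintegral_image hmeas hderiv hinj g]
  refine setLIntegral_congr_fun hmeas (fun T hT => ?_)
  have h1 : 0 < Real.sinh T := Real.sinh_pos_iff.mpr hT.1
  rw [abs_of_nonneg (by positivity), mul_comm]

lemma measurableSet_aux (S C : ℝ) :
    MeasurableSet {T : ℝ | 0 < T ∧ 1 < Real.cosh T * S - C} := by
  have : {T : ℝ | 0 < T ∧ 1 < Real.cosh T * S - C}
      = Ioi 0 ∩ (fun T : ℝ => Real.cosh T * S - C) ⁻¹' Ioi 1 := by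
    ext T; simp [and_comm]
  rw [this]
  exact measurableSet_Ioi.inter (((Real.continuous_cosh.mul continuous_const).sub
    continuous_const).measurable measurableSet_Ioi)

lemma inner_eq (F : ℝ → ℝ≥0∞) {x₁ x₂ : ℝ} (h1 : 0 < x₁) (h2 : 0 < x₂) :
    ∫⁻ x₃ in Ioi (0:ℝ),
        F (L8 x₁ x₂ x₃)
          * ENNReal.ofReal (Real.sinh (x₁ / 2) * Real.sinh (x₂ / 2) * Real.sinh (x₃ / 2))
      = 2 * ∫⁻ T in {T : ℝ | 0 < T ∧ 1 < Real.cosh T * Real.sinh (x₁ / 2) * Real.sinh (x₂ / 2)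
            - Real.cosh (x₁ / 2) * Real.cosh (x₂ / 2)},
          F (hT T x₁ x₂)
            * ENNReal.ofReal (Real.sinh (x₁ / 2) ^ 2 * Real.sinh (x₂ / 2) ^ 2 * Real.sinh T) := by
  have hS1 : 0 < Real.sinh (x₁ / 2) := Real.sinh_pos_iff.mpr (by linarith)
  have hS2 : 0 < Real.sinh (x₂ / 2) := Real.sinh_pos_iff.mpr (by linarith)
  have hS : 0 < Real.sinh (x₁ / 2) * Real.sinh (x₂ / 2) := by positivity
  have hSC : Real.sinh (x₁ / 2) * Real.sinh (x₂ / 2)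
      ≤ Real.cosh (x₁ / 2) * Real.cosh (x₂ / 2) := by
    have h := Real.cosh_sub (x₁ / 2) (x₂ / 2)
    have h' := Real.one_le_cosh (x₁ / 2 - x₂ / 2)
    linarith
  set G : ℝ → ℝ≥0∞ := fun u =>
    F (2 * _root_.arcosh (2 * Real.cosh (x₁ / 2) * Real.cosh (x₂ / 2) + u))
      * ENNReal.ofReal (Real.sinh (x₁ / 2) * Real.sinh (x₂ / 2)) with hGdef
  have hL : ∫⁻ x₃ in Ioi (0:ℝ),
        F (L8 x₁ x₂ x₃)
          * ENNReal.ofReal (Real.sinh (x₁ / 2) * Real.sinh (x₂ / 2) * Real.sinh (x₃ / 2))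
      = ∫⁻ x in Ioi (0:ℝ), G (Real.cosh (x / 2)) * ENNReal.ofReal (Real.sinh (x / 2)) := by
    refine setLIntegral_congr_fun measurableSet_Ioi (fun x hx => ?_)
    rw [hGdef]
    simp only [L8]
    rw [ENNReal.ofReal_mul (by positivity : (0:ℝ) ≤ Real.sinh (x₁ / 2) * Real.sinh (x₂ / 2))]
    ring
  have hsetassoc : {T : ℝ | 0 < T ∧ 1 < Real.cosh T * Real.sinh (x₁ / 2) * Real.sinh (x₂ / 2)
        - Real.cosh (x₁ / 2) * Real.cosh (x₂ / 2)}
      = {T : ℝ | 0 < T ∧ 1 < Real.cosh T * (Real.sinh (x₁ / 2) * Real.sinh (x₂ / 2))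
        - Real.cosh (x₁ / 2) * Real.cosh (x₂ / 2)} := by
    ext T; simp only [mem_setOf_eq, mul_assoc]
  have hR : ∫⁻ T in {T : ℝ | 0 < T ∧ 1 < Real.cosh T * Real.sinh (x₁ / 2) * Real.sinh (x₂ / 2)
            - Real.cosh (x₁ / 2) * Real.cosh (x₂ / 2)},
          F (hT T x₁ x₂)
            * ENNReal.ofReal (Real.sinh (x₁ / 2) ^ 2 * Real.sinh (x₂ / 2) ^ 2 * Real.sinh T)
      = ∫⁻ T in {T : ℝ | 0 < T ∧ 1 < Real.cosh T * (Real.sinh (x₁ / 2) * Real.sinh (x₂ / 2))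
            - Real.cosh (x₁ / 2) * Real.cosh (x₂ / 2)},
          G (Real.cosh T * (Real.sinh (x₁ / 2) * Real.sinh (x₂ / 2))
              - Real.cosh (x₁ / 2) * Real.cosh (x₂ / 2))
            * ENNReal.ofReal (Real.sinh T * (Real.sinh (x₁ / 2) * Real.sinh (x₂ / 2))) := by
    rw [hsetassoc]
    refine setLIntegral_congr_fun (measurableSet_aux _ _) (fun T hTmem => ?_)
    obtain ⟨hT0, -⟩ := hTmem
    have hsT : 0 < Real.sinh T := Real.sinh_pos_iff.mpr hT0
    rw [hGdef]
    simp only [hT]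
    rw [show 2 * Real.cosh (x₁ / 2) * Real.cosh (x₂ / 2)
          + (Real.cosh T * (Real.sinh (x₁ / 2) * Real.sinh (x₂ / 2))
            - Real.cosh (x₁ / 2) * Real.cosh (x₂ / 2))
        = Real.cosh (x₁ / 2) * Real.cosh (x₂ / 2)
          + Real.cosh T * Real.sinh (x₁ / 2) * Real.sinh (x₂ / 2) by ring,
      show Real.sinh (x₁ / 2) ^ 2 * Real.sinh (x₂ / 2) ^ 2 * Real.sinh T
        = (Real.sinh (x₁ / 2) * Real.sinh (x₂ / 2))
          * (Real.sinh T * (Real.sinh (x₁ / 2) * Real.sinh (x₂ / 2))) by ring,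
      ENNReal.ofReal_mul hS.le]
    ring
  rw [hL, key_left G, hR, key_right G hS hSC]


/-- the change-of-variables identity expressing the pushforward of
`sinh(x₁/2)sinh(x₂/2)sinh(x₃/2) dx₁dx₂dx₃` under `𝔏₈` in the coordinates `(T,x₁,x₂)`. -/
theorem figure_eight_change_of_variables (F : ℝ → ℝ≥0∞) (hF : Measurable F) :
    (∫⁻ p in {p : ℝ × ℝ × ℝ | 0 < p.1 ∧ 0 < p.2.1 ∧ 0 < p.2.2},
        F (L8 p.1 p.2.1 p.2.2) *
          ENNReal.ofReal (Real.sinh (p.1 / 2) * Real.sinh (p.2.1 / 2) * Real.sinh (p.2.2 / 2)))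
      = 2 * ∫⁻ p in frakD,
          F (hT p.1 p.2.1 p.2.2) *
            ENNReal.ofReal (Real.sinh (p.2.1 / 2) ^ 2 * Real.sinh (p.2.2 / 2) ^ 2
              * Real.sinh p.1) := by
  set μ₀ : Measure ℝ := volume.restrict (Ioi 0) with hμ₀
  -- the two integrands
  set f : ℝ × ℝ × ℝ → ℝ≥0∞ := fun p =>
    F (L8 p.1 p.2.1 p.2.2) *
      ENNReal.ofReal (Real.sinh (p.1 / 2) * Real.sinh (p.2.1 / 2) * Real.sinh (p.2.2 / 2))
    with hfdef
  set h : ℝ × ℝ × ℝ → ℝ≥0∞ := fun p =>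
    F (hT p.1 p.2.1 p.2.2) *
      ENNReal.ofReal (Real.sinh (p.2.1 / 2) ^ 2 * Real.sinh (p.2.2 / 2) ^ 2 * Real.sinh p.1)
    with hhdef
  have hfm : Measurable f := by
    apply Measurable.mul
    · exact hF.comp ((_root_.measurable_arcosh.comp (by fun_prop)).const_mul 2)
    · exact ENNReal.measurable_ofReal.comp (by fun_prop)
  have hhm : Measurable h := by
    apply Measurable.mul
    · exact hF.comp ((_root_.measurable_arcosh.comp (by fun_prop)).const_mul 2)
    · exact ENNReal.measurable_ofReal.comp (by fun_prop)
  set W : Set (ℝ × ℝ × ℝ) :=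
    {p : ℝ × ℝ × ℝ | 1 < Real.cosh p.1 * Real.sinh (p.2.1 / 2) * Real.sinh (p.2.2 / 2)
      - Real.cosh (p.2.1 / 2) * Real.cosh (p.2.2 / 2)} with hWdef
  have hW : MeasurableSet W := by
    have : W = (fun p : ℝ × ℝ × ℝ => Real.cosh p.1 * Real.sinh (p.2.1 / 2)
        * Real.sinh (p.2.2 / 2) - Real.cosh (p.2.1 / 2) * Real.cosh (p.2.2 / 2)) ⁻¹' Ioi 1 := by
      ext p; simp [hWdef]
    rw [this]
    exact (by fun_prop : Continuous fun p : ℝ × ℝ × ℝ => Real.cosh p.1 * Real.sinh (p.2.1 / 2)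
        * Real.sinh (p.2.2 / 2) - Real.cosh (p.2.1 / 2) * Real.cosh (p.2.2 / 2)).measurable
      measurableSet_Ioi
  have hset1 : {p : ℝ × ℝ × ℝ | 0 < p.1 ∧ 0 < p.2.1 ∧ 0 < p.2.2}
      = Ioi (0:ℝ) ×ˢ (Ioi (0:ℝ) ×ˢ Ioi (0:ℝ)) := by
    ext ⟨a, b, c⟩; simp [Set.mem_prod]
  have hfrakD : frakD = W ∩ (Ioi (0:ℝ) ×ˢ (Ioi (0:ℝ) ×ˢ Ioi (0:ℝ))) := by
    ext ⟨a, b, c⟩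
    simp only [frakD, hWdef, Set.mem_inter_iff, Set.mem_setOf_eq, Set.mem_prod, mem_Ioi]
    tauto
  have hvol : μ₀.prod (μ₀.prod μ₀)
      = (volume : Measure (ℝ × ℝ × ℝ)).restrict (Ioi (0:ℝ) ×ˢ (Ioi (0:ℝ) ×ˢ Ioi (0:ℝ))) := by
    rw [hμ₀, Measure.prod_restrict, ← Measure.volume_eq_prod, Measure.prod_restrict, ← Measure.volume_eq_prod]
  -- LHS
  have hLHS : (∫⁻ p in {p : ℝ × ℝ × ℝ | 0 < p.1 ∧ 0 < p.2.1 ∧ 0 < p.2.2}, f p)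
      = ∫⁻ x₁, ∫⁻ x₂, ∫⁻ x₃, f (x₁, x₂, x₃) ∂μ₀ ∂μ₀ ∂μ₀ := by
    rw [hset1, ← hvol, lintegral_prod _ hfm.aemeasurable]
    exact lintegral_congr fun x₁ =>
      lintegral_prod _ ((hfm.comp measurable_prodMk_left).aemeasurable)
  -- RHS
  have hWind : Measurable (W.indicator h) := hhm.indicator hW
  have hRHS : (∫⁻ p in frakD, h p)
      = ∫⁻ x₁, ∫⁻ x₂, ∫⁻ T, W.indicator h (T, x₁, x₂) ∂μ₀ ∂μ₀ ∂μ₀ := by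
    have hG : Measurable fun q : ℝ × ℝ => ∫⁻ T, W.indicator h (T, q.1, q.2) ∂μ₀ := by
      have : Measurable fun z : (ℝ × ℝ) × ℝ => W.indicator h (z.2, z.1.1, z.1.2) :=
        hWind.comp (by fun_prop)
      exact this.lintegral_prod_right'
    calc ∫⁻ p in frakD, h p
        = ∫⁻ p, W.indicator h p ∂(μ₀.prod (μ₀.prod μ₀)) := by
          rw [hfrakD, ← Measure.restrict_restrict hW, ← hvol, ← lintegral_indicator hW]
      _ = ∫⁻ T, ∫⁻ q, W.indicator h (T, q) ∂(μ₀.prod μ₀) ∂μ₀ :=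
          lintegral_prod _ hWind.aemeasurable
      _ = ∫⁻ q, ∫⁻ T, W.indicator h (T, q) ∂μ₀ ∂(μ₀.prod μ₀) :=
          lintegral_lintegral_swap hWind.aemeasurable
      _ = ∫⁻ x₁, ∫⁻ x₂, ∫⁻ T, W.indicator h (T, x₁, x₂) ∂μ₀ ∂μ₀ ∂μ₀ :=
          lintegral_prod _ hG.aemeasurable
  rw [hLHS, hRHS,
    ← lintegral_const_mul' 2 _ (by norm_num : (2:ℝ≥0∞) ≠ ⊤)]
  refine setLIntegral_congr_fun measurableSet_Ioi (fun x₁ hx₁ => ?_)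
  rw [← lintegral_const_mul' 2 _ (by norm_num : (2:ℝ≥0∞) ≠ ⊤)]
  refine setLIntegral_congr_fun measurableSet_Ioi (fun x₂ hx₂ => ?_)
  have hx₁' : 0 < x₁ := hx₁
  have hx₂' : 0 < x₂ := hx₂
  set B : Set ℝ := {T : ℝ | 1 < Real.cosh T * Real.sinh (x₁ / 2) * Real.sinh (x₂ / 2)
      - Real.cosh (x₁ / 2) * Real.cosh (x₂ / 2)} with hBdef
  have hBmeas : MeasurableSet B := by
    have : B = (fun T : ℝ => Real.cosh T * Real.sinh (x₁ / 2) * Real.sinh (x₂ / 2)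
        - Real.cosh (x₁ / 2) * Real.cosh (x₂ / 2)) ⁻¹' Ioi 1 := by
      ext T; simp [hBdef]
    rw [this]
    exact (by fun_prop : Continuous fun T : ℝ => Real.cosh T * Real.sinh (x₁ / 2)
        * Real.sinh (x₂ / 2) - Real.cosh (x₁ / 2) * Real.cosh (x₂ / 2)).measurable
      measurableSet_Ioi
  have hstep : ∫⁻ T, W.indicator h (T, x₁, x₂) ∂μ₀
      = ∫⁻ T in {T : ℝ | 0 < T ∧ 1 < Real.cosh T * Real.sinh (x₁ / 2) * Real.sinh (x₂ / 2)
            - Real.cosh (x₁ / 2) * Real.cosh (x₂ / 2)}, h (T, x₁, x₂) := by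
    have hind : ∀ T : ℝ, W.indicator h (T, x₁, x₂)
        = B.indicator (fun T => h (T, x₁, x₂)) T := fun T => rfl
    have hBset : B ∩ Ioi 0 = {T : ℝ | 0 < T ∧ 1 < Real.cosh T * Real.sinh (x₁ / 2)
        * Real.sinh (x₂ / 2) - Real.cosh (x₁ / 2) * Real.cosh (x₂ / 2)} := by
      ext T
      simp only [hBdef, Set.mem_inter_iff, mem_setOf_eq, mem_Ioi]
      tauto
    rw [lintegral_congr hind, lintegral_indicator hBmeas, hμ₀,
      Measure.restrict_restrict hBmeas, hBset]
  rw [hstep]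
  exact inner_eq F hx₁' hx₂'
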